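/- Let {a_{ij}} be nonnegative reals on a directed graph G and suppose the induced comparison graph is strongly connected (with (i,j) an edge iff there is k with i,j ∈ N_k^+ and a_{kj} > 0). Then for any unit vector u ∈ ℝ^n with Σ_i u_i = 0, the reparametrized log-likelihood satisfies ℓ(s u) → −∞ as s → ∞, where ℓ(θ) = Σ_i Σ_{j∈N_i^+} a_{ij}[θ_j − log Σ_{k∈N_i^+} w_{ik} e^{θ_k}] and w_{ik} ≥ 1. -/

import Mathlib

open Finset Filter

private lemma sum_le_of_mem_aux {α : Type*} {s : Finset α} {f : α → ℝ} {x : α}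
    (hx : x ∈ s) (h : ∀ y ∈ s, f y ≤ 0) : ∑ y ∈ s, f y ≤ f x := by
  have h1 : -f x ≤ ∑ y ∈ s, -f y :=
    Finset.single_le_sum (f := fun y => -f y) (fun i hi => neg_nonneg.mpr (h i hi)) hx
  rw [Finset.sum_neg_distrib] at h1
  linarith

private lemma exists_desc_edge {α : Type*} {r : α → α → Prop} (u : α → ℝ) :
    ∀ {p q : α}, Relation.ReflTransGen r p q → u q < u p →
      ∃ x y, r x y ∧ u y < u x := by
  intro p q h
  induction h with
  | refl => intro h; exact absurd h (lt_irrefl _)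
  | @tail b c hpb hbc ih =>
    intro hlt
    by_cases hc : u c < u b
    · exact ⟨b, c, hbc, hc⟩
    · exact ih (lt_of_le_of_lt (not_lt.mp hc) hlt)

/-- Coercivity of the reparametrized log-likelihood along directions orthogonal to the
all-ones vector: if the comparison graph induced by `{a_{ij}}` is strongly connected,
`w_{ik} ≥ 1`, not all `a_{ij}` vanish, and `u` is a unit vector with `Σ_i u_i = 0`, then
`ℓ(s u) → −∞` as `s → ∞`. -/
theorem loglik_coercive_along_sum_zero_directions (n : ℕ)
    (N : Fin n → Finset (Fin n)) (w : Fin n → Fin n → ℝ) (a : Fin n → Fin n → ℝ)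
    (hw : ∀ i k, 1 ≤ w i k) (ha : ∀ i j, 0 ≤ a i j)
    (hnz : ∃ i j, j ∈ N i ∧ 0 < a i j)
    (hconn : ∀ i j : Fin n,
      Relation.ReflTransGen (fun u v => ∃ k, u ∈ N k ∧ v ∈ N k ∧ 0 < a k v) i j)
    (u : Fin n → ℝ) (hu : ‖u‖ = 1) (hsum : ∑ i, u i = 0) :
    Filter.Tendsto (fun s : ℝ =>
        ∑ i, ∑ j ∈ N i, a i j * ((s • u) j - Real.log (∑ k ∈ N i, w i k * Real.exp ((s • u) k))))
      Filter.atTop Filter.atBot := by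
  -- `u ≠ 0`
  have hn : 0 < n := by
    by_contra h
    push_neg at h
    interval_cases n
    · have : u = 0 := Subsingleton.elim _ _
      rw [this, norm_zero] at hu
      norm_num at hu
  have hune : u ≠ 0 := by
    intro h; rw [h, norm_zero] at hu; norm_num at hu
  -- find `p, q` with `u q < u p`
  obtain ⟨p, -, hpmax⟩ := Finset.exists_max_image (univ : Finset (Fin n)) u ⟨⟨0, hn⟩, mem_univ _⟩
  obtain ⟨q, -, hqmin⟩ := Finset.exists_min_image (univ : Finset (Fin n)) u ⟨⟨0, hn⟩, mem_univ _⟩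
  have hqp : u q < u p := by
    rcases lt_or_ge (u q) (u p) with h | h
    · exact h
    · exfalso
      have hconst : ∀ i, u i = u p := fun i =>
        le_antisymm (hpmax i (mem_univ i)) (le_trans h (hqmin i (mem_univ i)))
      have : ∑ i, u i = n * u p := by
        rw [Finset.sum_congr rfl fun i _ => hconst i]
        simp [Finset.card_univ, mul_comm]
      rw [hsum] at this
      have hup : u p = 0 := by
        have : (n : ℝ) ≠ 0 := Nat.cast_ne_zero.mpr hn.ne'
        field_simp at *
        rcases mul_eq_zero.mp this.symm with h0 | h0
        · exact h0
        · exact absurd h0 ‹(n : ℝ) ≠ 0›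
      exact hune (funext fun i => by rw [hconst i, hup]; rfl)
  -- find a descending edge
  obtain ⟨x, y, ⟨k, hxk, hyk, haky⟩, hyx⟩ := exists_desc_edge u (hconn p q) hqp
  -- the linear upper bound
  set C : ℝ := a k y * (u y - u x) with hC
  have hCneg : C < 0 := mul_neg_of_pos_of_neg haky (by linarith)
  have key : ∀ s : ℝ,
      (∑ i, ∑ j ∈ N i, a i j * ((s • u) j - Real.log (∑ m ∈ N i, w i m * Real.exp ((s • u) m))))
        ≤ C * s := by
    intro s
    have hterm : ∀ i : Fin n, ∀ j ∈ N i, ∀ z ∈ N i,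
        a i j * ((s • u) j - Real.log (∑ m ∈ N i, w i m * Real.exp ((s • u) m)))
          ≤ a i j * ((s • u) j - (s • u) z) := by
      intro i j hj z hz
      apply mul_le_mul_of_nonneg_left _ (ha i j)
      apply sub_le_sub_left
      have h1 : Real.exp ((s • u) z) ≤ ∑ m ∈ N i, w i m * Real.exp ((s • u) m) := by
        calc Real.exp ((s • u) z) ≤ w i z * Real.exp ((s • u) z) :=
              le_mul_of_one_le_left (Real.exp_pos _).le (hw i z)
          _ ≤ _ := Finset.single_le_sum
              (fun m _ => mul_nonneg (le_trans zero_le_one (hw i m)) (Real.exp_pos _).le) hz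
      have := Real.log_le_log (Real.exp_pos _) h1
      rwa [Real.log_exp] at this
    have hnonpos : ∀ i : Fin n, ∀ j ∈ N i,
        a i j * ((s • u) j - Real.log (∑ m ∈ N i, w i m * Real.exp ((s • u) m))) ≤ 0 := by
      intro i j hj
      have := hterm i j hj j hj
      simpa using this
    have hinner_nonpos : ∀ i : Fin n,
        (∑ j ∈ N i, a i j * ((s • u) j - Real.log (∑ m ∈ N i, w i m * Real.exp ((s • u) m)))) ≤ 0 :=
      fun i => Finset.sum_nonpos (hnonpos i)
    have h2 : (∑ i, ∑ j ∈ N i, a i j * ((s • u) j - Real.log (∑ m ∈ N i, w i m * Real.exp ((s • u) m))))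
        ≤ ∑ j ∈ N k, a k j * ((s • u) j - Real.log (∑ m ∈ N k, w k m * Real.exp ((s • u) m))) :=
      sum_le_of_mem_aux (mem_univ k) (fun i _ => hinner_nonpos i)
    have h3 : (∑ j ∈ N k, a k j * ((s • u) j - Real.log (∑ m ∈ N k, w k m * Real.exp ((s • u) m))))
        ≤ a k y * ((s • u) y - Real.log (∑ m ∈ N k, w k m * Real.exp ((s • u) m))) :=
      sum_le_of_mem_aux hyk (fun j hj => hnonpos k j hj)
    have h4 := hterm k y hyk x hxk
    have h5 : a k y * ((s • u) y - (s • u) x) = C * s := by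
      simp only [Pi.smul_apply, smul_eq_mul, hC]; ring
    linarith
  have hlin : Tendsto (fun s : ℝ => C * s) atTop atBot :=
    (tendsto_const_mul_atBot_of_neg hCneg).mpr tendsto_id
  exact tendsto_atBot_mono key hlin
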